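/- Let X be a σ-finite measure space and φ : X × X → ℂ of the form φ(x,y) = ⟨V(x), W(y)⟩_H for a Hilbert space H and essentially bounded measurable functions V, W : X → H. Then the map S_φ : T_k ↦ T_{φ·k} on Hilbert–Schmidt operators on L²(X) is bounded with norm at most (ess sup ‖V‖)(ess sup ‖W‖), where (φ·k)(x,y) = φ(y,x)k(x,y). -/

import Mathlib

open MeasureTheory
open scoped ComplexInnerProductSpace

/-- If `φ(x,y) = ⟨V(x), W(y)⟩_H` with `V, W : X → H` essentially bounded
measurable functions into a separable Hilbert space `H`, then the Schur multiplier
`S_φ : T_k ↦ T_{φ·k}` on Hilbert–Schmidt operators on `L²(X)` is bounded with norm at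
most `(ess sup ‖V‖)(ess sup ‖W‖)`.  Since `T_k ↦ k` is an isometry onto `L²(X × X)`
(with the Hilbert–Schmidt norm), this is expressed at the level of kernels:
`‖φ · k‖₂ ≤ C_V C_W ‖k‖₂` for every `k ∈ L²(X × X)`. -/
theorem schur_multiplier_HS_bound
    {X : Type*} [MeasurableSpace X] (μ : Measure X) [SigmaFinite μ]
    {H : Type*} [NormedAddCommGroup H] [InnerProductSpace ℂ H]
    [TopologicalSpace.SeparableSpace H] [MeasurableSpace H] [BorelSpace H]
    (V W : X → H) (hVm : Measurable V) (hWm : Measurable W)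
    (CV CW : ℝ) (hCV : 0 ≤ CV) (hCW : 0 ≤ CW)
    (hV : ∀ᵐ x ∂μ, ‖V x‖ ≤ CV) (hW : ∀ᵐ y ∂μ, ‖W y‖ ≤ CW)
    (φ : X × X → ℂ) (hφ : ∀ x y, φ (x, y) = ⟪V x, W y⟫)
    (k : X × X → ℂ) (hk : MemLp k 2 (μ.prod μ)) :
    MemLp (fun p : X × X => φ (p.2, p.1) * k p) 2 (μ.prod μ) ∧
      eLpNorm (fun p : X × X => φ (p.2, p.1) * k p) 2 (μ.prod μ) ≤
        ENNReal.ofReal (CV * CW) * eLpNorm k 2 (μ.prod μ) := by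
  haveI : SecondCountableTopology H :=
    UniformSpace.secondCountable_of_separable H
  have hVs : ∀ᵐ p : X × X ∂μ.prod μ, ‖V p.2‖ ≤ CV :=
    MeasureTheory.Measure.quasiMeasurePreserving_snd.ae hV
  have hWs : ∀ᵐ p : X × X ∂μ.prod μ, ‖W p.1‖ ≤ CW :=
    MeasureTheory.Measure.quasiMeasurePreserving_fst.ae hW
  have hbound : ∀ᵐ p : X × X ∂μ.prod μ,
      ‖φ (p.2, p.1) * k p‖ ≤ (CV * CW) * ‖k p‖ := by
    filter_upwards [hVs, hWs] with p h1 h2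
    rw [norm_mul, hφ]
    gcongr
    calc ‖(⟪V p.2, W p.1⟫ : ℂ)‖ ≤ ‖V p.2‖ * ‖W p.1‖ := norm_inner_le_norm _ _
      _ ≤ CV * CW := by gcongr
  have hmeas : AEStronglyMeasurable (fun p : X × X => φ (p.2, p.1) * k p) (μ.prod μ) := by
    have h1 : Measurable fun p : X × X => φ (p.2, p.1) := by
      simp only [hφ]
      exact (hVm.comp measurable_snd).inner (hWm.comp measurable_fst)
    exact (h1.aestronglyMeasurable.mul hk.1)
  exact ⟨hk.of_le_mul hmeas hbound, eLpNorm_le_mul_eLpNorm_of_ae_le_mul hbound 2⟩
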